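/- arXiv:1102.0921 — 2 statements merged into one kernel-verified Lean document; each statement's English description precedes it below -/
import Mathlib

section
/- Let α, β, α₀, β₁ ∈ ℝ. Let f ∈ ℝ[[X]] satisfy f(0) = 0 and the differential equation f' = 1 + α·f + β·f², and let g ∈ ℝ[[X]] satisfy g(0) = 1 and g' = (α₀ + β₁·f)·g. Let f̄ be the compositional inverse of f (f̄(0)=0, f∘f̄ = X), let h = (g∘f̄)⁻¹, and define the polynomials p_n(X) = ∑_{k=0}^{n} (n!/k!)·([Xⁿ](h·f̄ᵏ))·Xᵏ ∈ ℝ[X] (so [h, f̄] = [g,f]⁻¹ is the coefficient array of the p_n as an exponential Riordan array). Then p_0 = 1, p_1 = X − α₀, and for all n ≥ 1, p_{n+1} = (X − (α₀ + n·α))·p_n − n·(β₁ + (n−1)·β)·p_{n−1}. (That is, an exponential Riordan array with tridiagonal production matrix, with diagonal entries α_n = α₀ + nα in arithmetic progression and subdiagonal entries β_n = n(β₁ + (n−1)β) with β_n/n in arithmetic progression, has inverse equal to the coefficient array of a family of monic orthogonal polynomials.) -/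
/-- Substitution (composition) of formal power series: `psComp h u = h ∘ u`,
the series obtained by substituting `u` (with zero constant term) into `h`. -/
noncomputable def psComp (h u : PowerSeries ℝ) : PowerSeries ℝ :=
  PowerSeries.mk fun n =>
    ∑ k ∈ Finset.range (n + 1), PowerSeries.coeff k h * PowerSeries.coeff n (u ^ k)


namespace PsCompAux

open PowerSeries Finset

lemma coeff_mul_pow_eq_zero {u : PowerSeries ℝ} (hu : constantCoeff u = 0)
    (w : PowerSeries ℝ) {n k : ℕ} (hnk : n < k) : coeff n (w * u ^ k) = 0 := by
  obtain ⟨v, rfl⟩ := X_dvd_iff.mpr hu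
  have e : w * (X * v) ^ k = X ^ k * (w * v ^ k) := by ring
  rw [e, coeff_X_pow_mul', if_neg (by omega)]

lemma coeff_pow_eq_zero {u : PowerSeries ℝ} (hu : constantCoeff u = 0)
    {n k : ℕ} (hnk : n < k) : coeff n (u ^ k) = 0 := by
  simpa using coeff_mul_pow_eq_zero hu 1 hnk

lemma psComp_coeff (a u : PowerSeries ℝ) (hu : constantCoeff u = 0) {n N : ℕ} (hN : n < N) :
    coeff n (psComp a u) =
      coeff n (∑ k ∈ Finset.range N, C (coeff k a) * u ^ k) := by
  rw [psComp, coeff_mk, map_sum]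
  simp_rw [coeff_C_mul]
  refine Finset.sum_subset (Finset.range_subset_range.mpr (by omega)) ?_
  intro k hk hk'
  rw [coeff_pow_eq_zero hu (by simp at hk'; omega), mul_zero]

lemma psComp_add (a b u : PowerSeries ℝ) :
    psComp (a + b) u = psComp a u + psComp b u := by
  ext n
  simp [psComp, coeff_mk, add_mul, Finset.sum_add_distrib]

lemma psComp_C (r : ℝ) (u : PowerSeries ℝ) : psComp (C r) u = C r := by
  ext n
  simp only [psComp, coeff_mk, coeff_C, ite_mul, zero_mul]
  rw [Finset.sum_ite_eq' (Finset.range (n+1)) 0]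
  simp [coeff_one]

lemma psComp_one (u : PowerSeries ℝ) : psComp 1 u = 1 := by
  simpa using psComp_C 1 u

lemma coeff_mul_congr {A A' B B' : PowerSeries ℝ} {n : ℕ}
    (hA : ∀ i ≤ n, coeff i A = coeff i A') (hB : ∀ i ≤ n, coeff i B = coeff i B') :
    coeff n (A * B) = coeff n (A' * B') := by
  rw [coeff_mul, coeff_mul]
  refine Finset.sum_congr rfl fun p hp => ?_
  have hp' := Finset.HasAntidiagonal.mem_antidiagonal.mp hp
  rw [hA p.1 (by omega), hB p.2 (by omega)]

lemma tri (n : ℕ) (F : ℕ → ℕ → ℝ) (hF : ∀ i j, n < i + j → F i j = 0) :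
    ∑ i ∈ range (n+1), ∑ j ∈ range (n+1), F i j
      = ∑ k ∈ range (n+1), ∑ p ∈ Finset.HasAntidiagonal.antidiagonal k, F p.1 p.2 := by
  rw [← Finset.sum_product']
  have hdisj : (↑(range (n+1)) : Set ℕ).PairwiseDisjoint Finset.HasAntidiagonal.antidiagonal := by
    intro i _ j _ hij
    refine Finset.disjoint_left.mpr fun p hp hq => hij ?_
    rw [← Finset.HasAntidiagonal.mem_antidiagonal.mp hp, Finset.HasAntidiagonal.mem_antidiagonal.mp hq]
  rw [← Finset.sum_biUnion hdisj]
  refine (Finset.sum_subset ?_ ?_).symm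
  · intro p hp
    simp only [Finset.mem_biUnion, Finset.mem_range, Finset.HasAntidiagonal.mem_antidiagonal] at hp
    obtain ⟨k, hk, hpk⟩ := hp
    simp only [Finset.mem_product, Finset.mem_range]
    omega
  · intro p hp hnp
    refine hF p.1 p.2 ?_
    simp only [Finset.mem_biUnion, Finset.mem_range, Finset.HasAntidiagonal.mem_antidiagonal] at hnp
    by_contra hle
    exact hnp ⟨p.1 + p.2, by omega, rfl⟩

lemma psComp_mul (a b u : PowerSeries ℝ) (hu : constantCoeff u = 0) :
    psComp (a * b) u = psComp a u * psComp b u := by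
  ext n
  rw [psComp_coeff (a*b) u hu (lt_add_one n),
    coeff_mul_congr (fun i hi => psComp_coeff a u hu (show i < n+1 by omega))
      (fun i hi => psComp_coeff b u hu (show i < n+1 by omega))]
  have e : ∀ i j : ℕ, (C (coeff i a) * u ^ i) * (C (coeff j b) * u ^ j)
      = C (coeff i a * coeff j b) * u ^ (i + j) := fun i j => by
    rw [map_mul, pow_add]; ring
  conv_rhs => rw [Finset.sum_mul_sum]
  simp_rw [e]
  conv_lhs => rw [map_sum]
  conv_rhs => rw [map_sum]
  simp_rw [map_sum, coeff_C_mul, coeff_mul]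
  rw [tri n (fun i j => coeff i a * coeff j b * coeff n (u ^ (i + j)))
    (fun i j hij => by rw [coeff_pow_eq_zero hu hij, mul_zero])]
  refine Finset.sum_congr rfl fun k hk => ?_
  rw [Finset.sum_mul]
  refine Finset.sum_congr rfl fun q hq => ?_
  rw [Finset.HasAntidiagonal.mem_antidiagonal.mp hq]

lemma psComp_derivative (a u : PowerSeries ℝ) (hu : constantCoeff u = 0) :
    derivative ℝ (psComp a u) = psComp (derivative ℝ a) u * derivative ℝ u := by
  ext n
  rw [coeff_derivative, psComp_coeff a u hu (show n+1 < n+2 by omega),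
    ← coeff_derivative,
    coeff_mul_congr (fun i hi => psComp_coeff (derivative ℝ a) u hu (show i < n+1 by omega))
      (fun i _ => rfl)]
  have dpow : ∀ k : ℕ, coeff n (derivative ℝ (u ^ (k+1)))
      = ((k:ℝ)+1) * coeff n (u ^ k * derivative ℝ u) := by
    intro k
    rw [Derivation.leibniz_pow]
    simp only [Nat.add_sub_cancel, smul_eq_mul, nsmul_eq_mul]
    rw [← map_natCast C (k+1), coeff_C_mul]
    push_cast; ring
  calc coeff n (derivative ℝ (∑ k ∈ range (n+2), C (coeff k a) * u ^ k))
      = ∑ k ∈ range (n+2), coeff k a * coeff n (derivative ℝ (u ^ k)) := by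
        rw [map_sum, map_sum]
        refine Finset.sum_congr rfl fun k hk => ?_
        rw [Derivation.leibniz, derivative_C, smul_eq_mul, smul_eq_mul, mul_zero, add_zero,
          coeff_C_mul]
    _ = ∑ k ∈ range (n+1), coeff (k+1) a * (((k:ℝ)+1) * coeff n (u ^ k * derivative ℝ u)) := by
        rw [Finset.sum_range_succ']
        simp only [dpow, pow_zero, Derivation.map_one_eq_zero, map_zero, mul_zero, add_zero]
    _ = coeff n ((∑ k ∈ range (n+1), C (coeff k (derivative ℝ a)) * u ^ k)
          * derivative ℝ u) := by
        rw [Finset.sum_mul, map_sum]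
        refine Finset.sum_congr rfl fun k hk => ?_
        rw [mul_assoc, coeff_C_mul, coeff_derivative]
        push_cast; ring

end PsCompAux


open PowerSeries Finset PsCompAux

/-- If the exponential Riordan array `[g, f]` has tridiagonal production matrix, with
diagonal `αₙ = α₀ + nα` in arithmetic progression and subdiagonal
`βₙ = n(β₁ + (n−1)β)` with `βₙ/n` in arithmetic progression (which corresponds to
`f' = 1 + αf + βf²`, `g'/g = α₀ + β₁ f`), then `[g,f]⁻¹ = [1/(g∘f̄), f̄]` is the
coefficient array of a family of monic orthogonal polynomials satisfying the
corresponding three-term recurrence. -/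
theorem exp_riordan_tridiagonal_inverse_orthogonal (α β α₀ β₁ : ℝ)
    (f g fbar h : PowerSeries ℝ)
    (hf0 : PowerSeries.constantCoeff f = 0)
    (hf' : PowerSeries.derivative ℝ f = 1 + PowerSeries.C α * f + PowerSeries.C β * f ^ 2)
    (hg0 : PowerSeries.constantCoeff g = 1)
    (hg' : PowerSeries.derivative ℝ g = (PowerSeries.C α₀ + PowerSeries.C β₁ * f) * g)
    (hfbar0 : PowerSeries.constantCoeff fbar = 0)
    (hfbar : psComp f fbar = PowerSeries.X)
    (hh : h = (psComp g fbar)⁻¹)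
    (p : ℕ → Polynomial ℝ)
    (hp : ∀ n, p n = ∑ k ∈ Finset.range (n + 1),
      Polynomial.C (((n.factorial : ℝ) / (k.factorial : ℝ)) *
        PowerSeries.coeff n (h * fbar ^ k)) * Polynomial.X ^ k) :
    p 0 = 1 ∧
    p 1 = Polynomial.X - Polynomial.C α₀ ∧
    (∀ n : ℕ, 1 ≤ n →
      p (n + 1) = (Polynomial.X - Polynomial.C (α₀ + (n : ℝ) * α)) * p n -
        Polynomial.C ((n : ℝ) * (β₁ + ((n : ℝ) - 1) * β)) * p (n - 1)) := by
  -- notation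
  set G : PowerSeries ℝ := psComp g fbar with hG
  -- constant coefficient of G
  have hG0 : constantCoeff G = 1 := by
    have e : coeff 0 G = 1 := by
      rw [hG, psComp, coeff_mk]
      simp [coeff_zero_eq_constantCoeff, hg0]
    rwa [coeff_zero_eq_constantCoeff] at e
  have hGh : G * h = 1 := by
    rw [hh]
    exact PowerSeries.mul_inv_cancel _ (by rw [hG0]; exact one_ne_zero)
  have hh0 : constantCoeff h = 1 := by
    rw [hh, PowerSeries.constantCoeff_inv, hG0, inv_one]
  -- Q f̄' = 1
  have hfb' : (1 + C α * X + C β * X ^ 2) * derivative ℝ fbar = 1 := by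
    have h1 := congrArg (derivative ℝ) hfbar
    rw [psComp_derivative f fbar hfbar0, derivative_X, hf'] at h1
    rw [psComp_add, psComp_add, psComp_one, psComp_mul _ _ _ hfbar0,
      psComp_mul _ _ _ hfbar0, psComp_C, psComp_C, sq, psComp_mul _ _ _ hfbar0, hfbar, ← sq] at h1
    exact h1
  -- G' = (α₀ + β₁ X) G f̄'
  have hG' : derivative ℝ G = (C α₀ + C β₁ * X) * G * derivative ℝ fbar := by
    rw [hG, psComp_derivative g fbar hfbar0, hg', psComp_mul _ _ _ hfbar0,
      psComp_add, psComp_C, psComp_mul _ _ _ hfbar0, psComp_C, hfbar]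
  -- Q h' = -(α₀ + β₁ X) h
  have hQh : (1 + C α * X + C β * X ^ 2) * derivative ℝ h
      = -((C α₀ + C β₁ * X) * h) := by
    have hdh : derivative ℝ h = -h ^ 2 * derivative ℝ G := by
      rw [hh]; exact PowerSeries.derivative_inv' G
    have e : (1 + C α * X + C β * X ^ 2) * derivative ℝ h
        = -((C α₀ + C β₁ * X) * h) * ((G * h) *
            ((1 + C α * X + C β * X ^ 2) * derivative ℝ fbar)) := by
      rw [hdh, hG']; ring
    rw [e, hGh, hfb', mul_one, mul_one]
  -- Q (h f̄^{k+1})' = -(α₀+β₁X) h f̄^{k+1} + (k+1) h f̄^k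
  have hQH : ∀ k : ℕ, (1 + C α * X + C β * X ^ 2) * derivative ℝ (h * fbar ^ (k+1))
      = -((C α₀ + C β₁ * X) * (h * fbar ^ (k+1))) + C ((k:ℝ)+1) * (h * fbar ^ k) := by
    intro k
    have e1 : derivative ℝ (h * fbar ^ (k+1))
        = h * derivative ℝ (fbar ^ (k+1)) + fbar ^ (k+1) * derivative ℝ h := by
      rw [Derivation.leibniz, smul_eq_mul, smul_eq_mul]
    have e2 : derivative ℝ (fbar ^ (k+1)) = C ((k:ℝ)+1) * fbar ^ k * derivative ℝ fbar := by
      rw [Derivation.leibniz_pow]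
      simp only [Nat.add_sub_cancel, smul_eq_mul, nsmul_eq_mul]
      rw [← map_natCast C (k+1)]
      push_cast
      ring
    have e3 : (1 + C α * X + C β * X ^ 2) * derivative ℝ (h * fbar ^ (k+1))
        = fbar ^ (k+1) * ((1 + C α * X + C β * X ^ 2) * derivative ℝ h)
          + C ((k:ℝ)+1) * (h * fbar ^ k) *
            ((1 + C α * X + C β * X ^ 2) * derivative ℝ fbar) := by
      rw [e1, e2]; ring
    rw [e3, hQh, hfb', mul_one]; ring
  -- coefficient of X (X * derivative s)
  have coeffX : ∀ (m : ℕ) (s : PowerSeries ℝ),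
      coeff m (X * derivative ℝ s) = (m : ℝ) * coeff m s := by
    intro m s
    cases m with
    | zero =>
        rw [coeff_zero_eq_constantCoeff, map_mul, constantCoeff_X, zero_mul]
        simp
    | succ m => rw [coeff_succ_X_mul, coeff_derivative]; push_cast; ring
  -- extraction of a coefficient recurrence from Q s' = w
  have key : ∀ (s w : PowerSeries ℝ), (1 + C α * X + C β * X ^ 2) * derivative ℝ s = w →
      ∀ m : ℕ, ((m:ℝ)+2) * coeff (m+2) s + α * ((m:ℝ)+1) * coeff (m+1) s
        + β * (m:ℝ) * coeff m s = coeff (m+1) w := by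
    intro s w hw m
    have e : w = derivative ℝ s + C α * (X * derivative ℝ s)
        + C β * (X * (X * derivative ℝ s)) := by rw [← hw]; ring
    rw [e, map_add, map_add, coeff_C_mul, coeff_C_mul, coeffX, coeff_succ_X_mul, coeffX,
      coeff_derivative]
    push_cast; ring
  -- the recurrences
  have R0 : ∀ m : ℕ, ((m:ℝ)+2) * coeff (m+2) h
      = -(α₀ + ((m:ℝ)+1) * α) * coeff (m+1) h - (β₁ + (m:ℝ) * β) * coeff m h := by
    intro m
    have k1 := key h _ hQh m
    have e : -((C α₀ + C β₁ * X) * h) = -(C α₀ * h) - C β₁ * (X * h) := by ring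
    rw [e, map_sub, map_neg, coeff_C_mul, coeff_C_mul, coeff_succ_X_mul] at k1
    linear_combination k1
  have R : ∀ m k : ℕ, ((m:ℝ)+2) * coeff (m+2) (h * fbar ^ (k+1))
      = -(α₀ + ((m:ℝ)+1) * α) * coeff (m+1) (h * fbar ^ (k+1))
        - (β₁ + (m:ℝ) * β) * coeff m (h * fbar ^ (k+1))
        + ((k:ℝ)+1) * coeff (m+1) (h * fbar ^ k) := by
    intro m k
    have k1 := key (h * fbar ^ (k+1)) _ (hQH k) m
    have e : -((C α₀ + C β₁ * X) * (h * fbar ^ (k+1))) + C ((k:ℝ)+1) * (h * fbar ^ k)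
        = -(C α₀ * (h * fbar ^ (k+1))) - C β₁ * (X * (h * fbar ^ (k+1)))
          + C ((k:ℝ)+1) * (h * fbar ^ k) := by ring
    rw [e, map_add, map_sub, map_neg, coeff_C_mul, coeff_C_mul, coeff_C_mul,
      coeff_succ_X_mul] at k1
    linear_combination k1
  -- initial coefficients
  have hfbar1 : coeff 1 fbar = 1 := by
    have h1 := congrArg (constantCoeff) hfb'
    rw [map_mul, map_add, map_add, map_one, map_mul, map_mul, constantCoeff_X] at h1
    simp only [mul_zero, add_zero, map_pow, constantCoeff_X, zero_pow, one_mul,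
      map_one] at h1
    rw [← coeff_zero_eq_constantCoeff] at h1
    rw [coeff_derivative] at h1
    simpa using h1
  have hh1 : coeff 1 h = -α₀ := by
    have h1 := congrArg (constantCoeff) hQh
    rw [map_mul, map_add, map_add, map_one, map_mul, map_mul, constantCoeff_X] at h1
    simp only [mul_zero, add_zero, map_pow, constantCoeff_X, zero_pow, one_mul,
      map_one, map_neg, map_mul, map_add, hh0, mul_one] at h1
    rw [← coeff_zero_eq_constantCoeff, coeff_derivative] at h1
    simpa using h1
  have hA11 : coeff 1 (h * fbar ^ 1) = 1 := by
    rw [pow_one, coeff_mul]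
    rw [Finset.Nat.sum_antidiagonal_eq_sum_range_succ_mk]
    simp [Finset.sum_range_succ, coeff_zero_eq_constantCoeff, hh0, hfbar0, hfbar1]
  -- coefficients of p n
  have coeff_p' : ∀ n j : ℕ, ((j.factorial : ℝ)) * (p n).coeff j
      = ((n.factorial : ℝ)) * coeff n (h * fbar ^ j) := by
    intro n j
    rw [hp n, Polynomial.finset_sum_coeff]
    simp_rw [Polynomial.coeff_C_mul, Polynomial.coeff_X_pow, mul_ite, mul_one, mul_zero]
    rw [Finset.sum_ite_eq (Finset.range (n+1)) j]
    by_cases hjn : j ∈ Finset.range (n+1)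
    · rw [if_pos hjn]
      have hj : (j.factorial : ℝ) ≠ 0 := Nat.cast_ne_zero.mpr (Nat.factorial_ne_zero j)
      field_simp
    · rw [if_neg hjn, mul_zero, coeff_mul_pow_eq_zero hfbar0 h (by simp at hjn; omega), mul_zero]
  refine ⟨?_, ?_, ?_⟩
  · rw [hp 0]
    simp [coeff_zero_eq_constantCoeff, hh0]
  · rw [hp 1]
    have e0 : coeff 1 (h * fbar ^ 0) = -α₀ := by rw [pow_zero, mul_one, hh1]
    rw [Finset.sum_range_succ, Finset.sum_range_one, e0, hA11]
    simp only [Nat.factorial_zero, Nat.factorial_one, Nat.cast_one, div_one, one_mul, mul_one,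
      pow_zero, pow_one, map_neg, map_one]
    ring
  · intro n hn
    obtain ⟨m, rfl⟩ : ∃ m, n = m + 1 := ⟨n - 1, by omega⟩
    have hmsub : m + 1 - 1 = m := rfl
    rw [hmsub]
    have fact2 : (((m+2).factorial : ℝ)) = ((m:ℝ)+2) * ((m+1).factorial : ℝ) := by
      rw [Nat.factorial_succ]; push_cast; ring
    have fact1 : (((m+1).factorial : ℝ)) = ((m:ℝ)+1) * (m.factorial : ℝ) := by
      rw [Nat.factorial_succ]; push_cast; ring
    ext j
    rcases j with _ | i
    · -- coefficient 0
      have c2 := coeff_p' (m+2) 0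
      have c1 := coeff_p' (m+1) 0
      have c0 := coeff_p' m 0
      simp only [Nat.factorial_zero, Nat.cast_one, one_mul] at c2 c1 c0
      rw [Polynomial.coeff_sub, Polynomial.mul_coeff_zero, Polynomial.mul_coeff_zero]
      simp only [Polynomial.coeff_sub, Polynomial.coeff_X_zero, Polynomial.coeff_C_zero,
        Polynomial.coeff_C, zero_sub]
      rw [show m + 1 + 1 = m + 2 from rfl] at *
      rw [c2, c1, c0]
      have r0 := R0 m
      rw [show ∀ x : PowerSeries ℝ, x * fbar ^ 0 = x from fun x => by rw [pow_zero, mul_one]] at *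
      push_cast
      linear_combination (((m:ℝ)+1) * (m.factorial : ℝ)) * r0
        + (coeff (m+2) h) * fact2
        + ((((m:ℝ)+2) * coeff (m+2) h + (α₀ + ((m:ℝ)+1) * α) * coeff (m+1) h)) * fact1
    · -- coefficient i+1
      have hfi : (((i+1).factorial : ℝ)) ≠ 0 := Nat.cast_ne_zero.mpr (Nat.factorial_ne_zero _)
      apply mul_left_cancel₀ hfi
      have facti : (((i+1).factorial : ℝ)) = ((i:ℝ)+1) * (i.factorial : ℝ) := by
        rw [Nat.factorial_succ]; push_cast; ring
      have c2 := coeff_p' (m+2) (i+1)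
      have c1 := coeff_p' (m+1) (i+1)
      have c0 := coeff_p' m (i+1)
      have cb := coeff_p' (m+1) i
      rw [show m + 1 + 1 = m + 2 from rfl] at *
      rw [Polynomial.coeff_sub, sub_mul, Polynomial.coeff_sub, Polynomial.coeff_X_mul,
        Polynomial.coeff_C_mul, Polynomial.coeff_C_mul]
      rw [c2]
      push_cast
      linear_combination (coeff (m+2) (h * fbar ^ (i+1))) * fact2
        + (((m+1).factorial : ℝ)) * R m i
        - ((i:ℝ)+1) * cb
        - ((p (m+1)).coeff i) * facti
        + (α₀ + ((m:ℝ)+1) * α) * c1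
        + (((m:ℝ)+1) * (β₁ + (m:ℝ) * β)) * c0
        - ((β₁ + (m:ℝ) * β) * coeff m (h * fbar ^ (i+1))) * fact1
end

section
/- Let r ∈ ℝ. In ℝ[[X]] let F have constant term 0 and be the compositional inverse of X·(1 + (2r−1)X + r(r−1)X²)⁻¹, and let G = (1 + r(1−r)X²)·(1 + (2r−1)X + r(r−1)X²)⁻¹. Then for every n ∈ ℕ, the coefficient of Xⁿ in (G∘F)⁻¹ equals the shifted Legendre polynomial value P̃_n(r) = ∑_{k=0}^{n} (−1)^{n−k}·C(n+k,2k)·C(2k,k)·rᵏ. That is, the first column of the inverse of the Riordan array (G, X·(1 + (2r−1)X + r(r−1)X²)⁻¹) consists of the shifted Legendre polynomials evaluated at r. -/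
open PowerSeries

lemma coeff_pow_zero {u : ℝ⟦X⟧} (hu : constantCoeff u = 0) {k m : ℕ} (h : m < k) :
    coeff m (u ^ k) = 0 := by
  have hd : (X : ℝ⟦X⟧) ^ k ∣ u ^ k := pow_dvd_pow_of_dvd (X_dvd_iff.mpr hu) k
  exact (X_pow_dvd_iff.mp hd) m h

lemma psComp_one (u : ℝ⟦X⟧) : psComp 1 u = 1 := by
  ext n
  simp [psComp, coeff_one, ite_mul, Finset.mem_range]

lemma psComp_add (a b u : ℝ⟦X⟧) : psComp (a + b) u = psComp a u + psComp b u := by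
  ext n
  simp [psComp, add_mul, Finset.sum_add_distrib]

lemma psComp_C_mul (a : ℝ) (h u : ℝ⟦X⟧) : psComp (C a * h) u = C a * psComp h u := by
  ext n
  simp [psComp, coeff_C_mul, Finset.mul_sum, mul_assoc]

lemma psComp_X_mul {u : ℝ⟦X⟧} (hu : constantCoeff u = 0) (h : ℝ⟦X⟧) :
    psComp (X * h) u = u * psComp h u := by
  ext n
  have hL : coeff n (psComp (X * h) u)
      = ∑ j ∈ Finset.range (n + 1), coeff j h * coeff n (u ^ (j + 1)) := by
    rw [psComp, coeff_mk, Finset.sum_range_succ']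
    simp only [coeff_succ_X_mul, coeff_zero_X_mul, zero_mul, add_zero]
    rw [Finset.sum_range_succ]
    have : coeff n (u ^ (n + 1)) = 0 := coeff_pow_zero hu (Nat.lt_succ_self n)
    rw [this, mul_zero, add_zero]
  rw [hL, coeff_mul]
  have step1 : ∀ p ∈ Finset.HasAntidiagonal.antidiagonal n,
      coeff p.1 u * coeff p.2 (psComp h u)
        = ∑ j ∈ Finset.range (n + 1), coeff p.1 u * (coeff j h * coeff p.2 (u ^ j)) := by
    intro p hp
    rw [psComp, coeff_mk, Finset.mul_sum]
    apply Finset.sum_subset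
    · intro x hx
      simp only [Finset.mem_range] at hx ⊢
      have : p.2 ≤ n := by
        have := Finset.HasAntidiagonal.mem_antidiagonal.mp hp; omega
      omega
    · intro x hx hnx
      simp only [Finset.mem_range] at hx hnx
      have : p.2 < x := by omega
      rw [coeff_pow_zero hu this, mul_zero, mul_zero]
  rw [Finset.sum_congr rfl step1, Finset.sum_comm]
  apply Finset.sum_congr rfl
  intro j _
  rw [pow_succ', coeff_mul, Finset.mul_sum]
  apply Finset.sum_congr rfl
  intro p _
  ring

lemma keyNat (m j : ℕ) :
    (m+2) * Nat.choose (m+j+3) (2*j+2) * Nat.choose (2*j+2) (j+1)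
      + (m+1) * Nat.choose (m+j+1) (2*j+2) * Nat.choose (2*j+2) (j+1)
    = (2*m+3) * (2 * Nat.choose (m+j+1) (2*j) * Nat.choose (2*j) j
      + Nat.choose (m+j+2) (2*j+2) * Nat.choose (2*j+2) (j+1)) := by
  rcases lt_or_ge m j with hmj | hmj
  · rcases eq_or_lt_of_le (Nat.succ_le_of_lt hmj) with hj | hj
    · -- j = m+1
      subst hj
      have e1 : (m+(m+1)+3).choose (2*(m+1)+2) = 1 := by
        rw [show m+(m+1)+3 = 2*(m+1)+2 by omega]; exact Nat.choose_self _
      have e2 : (m+(m+1)+1).choose (2*(m+1)+2) = 0 := Nat.choose_eq_zero_of_lt (by omega)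
      have e3 : (m+(m+1)+1).choose (2*(m+1)) = 1 := by
        rw [show m+(m+1)+1 = 2*(m+1) by omega]; exact Nat.choose_self _
      have e4 : (m+(m+1)+2).choose (2*(m+1)+2) = 0 := Nat.choose_eq_zero_of_lt (by omega)
      rw [e1, e2, e3, e4]
      have hc := Nat.succ_mul_centralBinom_succ (m+1)
      unfold Nat.centralBinom at hc
      rw [show 2*(m+1)+2 = 2*(m+1+1) by omega, show (m+1)+1 = m+1+1 by omega]
      zify at hc ⊢
      linear_combination hc
    · -- j ≥ m+2 : everything vanishes
      have h1 : Nat.choose (m+j+3) (2*j+2) = 0 := Nat.choose_eq_zero_of_lt (by omega)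
      have h2 : Nat.choose (m+j+1) (2*j+2) = 0 := Nat.choose_eq_zero_of_lt (by omega)
      have h3 : Nat.choose (m+j+1) (2*j) = 0 := Nat.choose_eq_zero_of_lt (by omega)
      have h4 : Nat.choose (m+j+2) (2*j+2) = 0 := Nat.choose_eq_zero_of_lt (by omega)
      simp [h1, h2, h3, h4]
  · rcases eq_or_lt_of_le hmj with hj | hj
    · -- j = m
      subst hj
      have e1 : (j+j+3).choose (2*j+2) = 2*j+3 := by
        rw [show j+j+3 = (2*j+2)+1 by omega]; exact Nat.choose_succ_self_right _
      have e2 : (j+j+1).choose (2*j+2) = 0 := Nat.choose_eq_zero_of_lt (by omega)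
      have e3 : (j+j+1).choose (2*j) = 2*j+1 := by
        rw [show j+j+1 = (2*j)+1 by omega]; exact Nat.choose_succ_self_right _
      have e4 : (j+j+2).choose (2*j+2) = 1 := by
        rw [show j+j+2 = 2*j+2 by omega]; exact Nat.choose_self _
      rw [e1, e2, e3, e4]
      have hc := Nat.succ_mul_centralBinom_succ j
      unfold Nat.centralBinom at hc
      rw [show 2*j+2 = 2*(j+1) by omega]
      zify at hc ⊢
      linear_combination (2*(j:ℤ)+3) * hc
    · -- generic : j+1 ≤ m
      obtain ⟨d, rfl⟩ : ∃ d, m = j + 1 + d := ⟨m - (j+1), by omega⟩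
      qify
      rw [Nat.cast_choose ℚ (show 2*j+2 ≤ j+1+d+j+3 by omega),
          Nat.cast_choose ℚ (show 2*j+2 ≤ j+1+d+j+1 by omega),
          Nat.cast_choose ℚ (show j+1 ≤ 2*j+2 by omega),
          Nat.cast_choose ℚ (show 2*j ≤ j+1+d+j+1 by omega),
          Nat.cast_choose ℚ (show j ≤ 2*j by omega),
          Nat.cast_choose ℚ (show 2*j+2 ≤ j+1+d+j+2 by omega)]
      rw [show j+1+d+j+3 - (2*j+2) = d+2 by omega,
          show j+1+d+j+1 - (2*j+2) = d by omega,
          show 2*j+2 - (j+1) = j+1 by omega,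
          show j+1+d+j+1 - 2*j = d+2 by omega,
          show 2*j - j = j by omega,
          show j+1+d+j+2 - (2*j+2) = d+1 by omega]
      have F3 : ((j+1+d+j+3).factorial : ℚ)
          = ((2*(j:ℚ)+d+4) * (2*j+d+3)) * ((j+1+d+j+1).factorial : ℚ) := by
        rw [show j+1+d+j+3 = ((j+1+d+j+1)+1)+1 by omega, Nat.factorial_succ, Nat.factorial_succ]
        push_cast; ring
      have F2 : ((j+1+d+j+2).factorial : ℚ)
          = (2*(j:ℚ)+d+3) * ((j+1+d+j+1).factorial : ℚ) := by
        rw [show j+1+d+j+2 = (j+1+d+j+1)+1 by omega, Nat.factorial_succ]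
        push_cast; ring
      have Fd2 : ((d+2).factorial : ℚ) = ((d:ℚ)+2)*((d:ℚ)+1) * (d.factorial : ℚ) := by
        rw [show d+2 = (d+1)+1 by omega, Nat.factorial_succ, Nat.factorial_succ]
        push_cast; ring
      have Fd1 : ((d+1).factorial : ℚ) = ((d:ℚ)+1) * (d.factorial : ℚ) := by
        rw [Nat.factorial_succ]; push_cast; ring
      have Fj2 : ((2*j+2).factorial : ℚ) = (2*(j:ℚ)+2)*(2*(j:ℚ)+1) * ((2*j).factorial : ℚ) := by
        rw [show 2*j+2 = (2*j+1)+1 by omega, Nat.factorial_succ, Nat.factorial_succ]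
        push_cast; ring
      have Fj1 : ((j+1).factorial : ℚ) = ((j:ℚ)+1) * (j.factorial : ℚ) := by
        rw [Nat.factorial_succ]; push_cast; ring
      rw [F3, F2, Fd2, Fd1, Fj2, Fj1]
      have h1 : ((j+1+d+j+1).factorial : ℚ) ≠ 0 := Nat.cast_ne_zero.mpr (Nat.factorial_ne_zero _)
      have h2 : ((2*j).factorial : ℚ) ≠ 0 := Nat.cast_ne_zero.mpr (Nat.factorial_ne_zero _)
      have h3 : ((j).factorial : ℚ) ≠ 0 := Nat.cast_ne_zero.mpr (Nat.factorial_ne_zero _)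
      have h4 : ((d).factorial : ℚ) ≠ 0 := Nat.cast_ne_zero.mpr (Nat.factorial_ne_zero _)
      have h5 : ((d:ℚ)+1) ≠ 0 := by positivity
      have h6 : ((d:ℚ)+2) ≠ 0 := by positivity
      have h7 : ((j:ℚ)+1) ≠ 0 := by positivity
      have h8 : (2*(j:ℚ)+1) ≠ 0 := by positivity
      have h9 : (2*(j:ℚ)+2) ≠ 0 := by positivity
      have h10 : (2*(j:ℚ)+(d:ℚ)+3) ≠ 0 := by positivity
      field_simp
      ring

noncomputable def pLeg (r : ℝ) (n : ℕ) : ℝ :=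
  ∑ k ∈ Finset.range (n + 1),
    (-1 : ℝ) ^ (n - k) * ((n + k).choose (2 * k) : ℝ) * ((2 * k).choose k : ℝ) * r ^ k

lemma neg_one_pow_sub (n k : ℕ) (h : k ≤ n) : (-1 : ℝ) ^ (n - k) = (-1) ^ n * (-1) ^ k := by
  have h1 : (-1 : ℝ) ^ k * (-1) ^ k = 1 := by
    rw [← pow_add, ← two_mul, pow_mul]; norm_num
  have h2 : n - k + k = n := by omega
  calc (-1 : ℝ) ^ (n - k) = (-1) ^ (n - k) * ((-1) ^ k * (-1) ^ k) := by rw [h1, mul_one]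
    _ = (-1) ^ (n - k + k) * (-1) ^ k := by rw [pow_add]; ring
    _ = (-1) ^ n * (-1) ^ k := by rw [h2]

lemma term_eq (r : ℝ) (n k : ℕ) :
    (-1 : ℝ) ^ (n - k) * ((n + k).choose (2 * k) : ℝ) * ((2 * k).choose k : ℝ) * r ^ k
      = (-1) ^ n * (-1) ^ k * ((n + k).choose (2 * k) : ℝ) * ((2 * k).choose k : ℝ) * r ^ k := by
  rcases le_or_gt k n with h | h
  · rw [neg_one_pow_sub n k h]
  · rw [Nat.choose_eq_zero_of_lt (show n + k < 2 * k by omega)]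
    push_cast; ring

lemma pLeg_ext (r : ℝ) (n N : ℕ) (h : n + 1 ≤ N) :
    pLeg r n = ∑ k ∈ Finset.range N,
      (-1 : ℝ) ^ (n - k) * ((n + k).choose (2 * k) : ℝ) * ((2 * k).choose k : ℝ) * r ^ k := by
  apply Finset.sum_subset (Finset.range_subset_range.mpr h)
  intro k hk hnk
  simp only [Finset.mem_range] at hk hnk
  rw [Nat.choose_eq_zero_of_lt (show n + k < 2 * k by omega)]
  push_cast; ring

lemma pLeg_rec (r : ℝ) (n : ℕ) :
    ((n : ℝ) + 1) * pLeg r (n + 1) + (n : ℝ) * pLeg r (n - 1)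
      = (2 * (n : ℝ) + 1) * ((2 * r - 1) * pLeg r n) := by
  rcases n with _ | m
  · simp [pLeg, Finset.sum_range_succ]
    ring
  · -- n = m+1
    have ext2 := pLeg_ext r (m + 2) (m + 4) (by omega)
    have ext1 := pLeg_ext r (m + 1) (m + 4) (by omega)
    have ext0 := pLeg_ext r m (m + 4) (by omega)
    set g : ℕ → ℝ := fun k =>
      if k = 0 then 0 else (-1 : ℝ) ^ (m + 1 - (k-1)) * ((m + 1 + (k-1)).choose (2 * (k-1)) : ℝ)
          * ((2 * (k-1)).choose (k-1) : ℝ) * r ^ (k-1) * r with hg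
    have shift : r * pLeg r (m + 1) = ∑ k ∈ Finset.range (m + 4), g k := by
      rw [Finset.sum_range_succ' g (m + 3)]
      have hg1 : ∀ j : ℕ, g (j + 1) = (-1 : ℝ) ^ (m + 1 - j) * ((m + 1 + j).choose (2 * j) : ℝ)
          * ((2 * j).choose j : ℝ) * r ^ j * r := by
        intro j; simp only [hg]; norm_num
      simp only [hg1]
      have h0 : g 0 = 0 := by simp [hg]
      rw [h0, add_zero, pLeg_ext r (m + 1) (m + 3) (by omega), Finset.mul_sum]
      apply Finset.sum_congr rfl
      intro k _
      ring
    have main : ∀ k ∈ Finset.range (m + 4),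
        ((m : ℝ) + 2) * ((-1 : ℝ) ^ (m + 2 - k) * ((m + 2 + k).choose (2 * k) : ℝ)
            * ((2 * k).choose k : ℝ) * r ^ k)
          + ((m : ℝ) + 1) * ((-1 : ℝ) ^ (m - k) * ((m + k).choose (2 * k) : ℝ)
            * ((2 * k).choose k : ℝ) * r ^ k)
          + (2 * (m : ℝ) + 3) * ((-1 : ℝ) ^ (m + 1 - k) * ((m + 1 + k).choose (2 * k) : ℝ)
            * ((2 * k).choose k : ℝ) * r ^ k)
        = 2 * (2 * (m : ℝ) + 3) * g k := by
      intro k _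
      rcases k with _ | j
      · have e : ∀ a : ℕ, ((a + 0).choose (2 * 0) : ℝ) = 1 := by intro a; simp
        simp only [hg]
        norm_num
        simp [pow_succ]
        ring
      · -- k = j+1
        have t2 := term_eq r (m + 2) (j + 1)
        have t0 := term_eq r m (j + 1)
        have t1 := term_eq r (m + 1) (j + 1)
        have tg := term_eq r (m + 1) j
        have key := keyNat m j
        have keyR : ((m : ℝ) + 2) * ((m + j + 3).choose (2 * j + 2) : ℝ)
              * ((2 * j + 2).choose (j + 1) : ℝ)
            + ((m : ℝ) + 1) * ((m + j + 1).choose (2 * j + 2) : ℝ)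
              * ((2 * j + 2).choose (j + 1) : ℝ)
          = (2 * (m : ℝ) + 3) * (2 * ((m + j + 1).choose (2 * j) : ℝ) * ((2 * j).choose j : ℝ)
            + ((m + j + 2).choose (2 * j + 2) : ℝ) * ((2 * j + 2).choose (j + 1) : ℝ)) := by
          exact_mod_cast congrArg (fun x : ℕ => (x : ℝ)) key
        rw [t2, t0, t1]
        have hgj : g (j + 1) = (-1 : ℝ) ^ (m + 1) * (-1) ^ j * ((m + 1 + j).choose (2 * j) : ℝ)
            * ((2 * j).choose j : ℝ) * r ^ j * r := by
          simp only [hg, if_neg (Nat.succ_ne_zero j), Nat.add_sub_cancel]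
          rw [tg]
        rw [hgj,
          show m + 2 + (j + 1) = m + j + 3 by omega,
          show 2 * (j + 1) = 2 * j + 2 by omega,
          show m + (j + 1) = m + j + 1 by omega,
          show m + 1 + (j + 1) = m + j + 2 by omega,
          show m + 1 + j = m + j + 1 by omega]
        linear_combination (-((-1 : ℝ) ^ m * (-1) ^ j * r ^ (j + 1))) * keyR
    have hsum := Finset.sum_congr rfl main
    simp only [Finset.sum_add_distrib, ← Finset.mul_sum] at hsum
    have hm1 : (m : ℕ) + 1 - 1 = m := rfl
    rw [hm1]
    simp only [show m + 1 + 1 = m + 2 from rfl]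
    push_cast
    linear_combination ((m:ℝ) + 2) * ext2 + ((m:ℝ) + 1) * ext0 + hsum
      - 2 * (2 * (m:ℝ) + 3) * shift + (2 * (m:ℝ) + 3) * ext1
/-- The first column of the inverse of the Riordan array
`((1+r(1−r)x²)/(1+(2r−1)x+r(r−1)x²), x/(1+(2r−1)x+r(r−1)x²))`, whose generating
function is `1/(G∘F)`, consists of the shifted Legendre polynomials evaluated at `r`. -/
theorem shifted_legendre_as_moments (r : ℝ) (F G : PowerSeries ℝ)
    (hF0 : PowerSeries.constantCoeff F = 0)
    (hF : psComp
      (PowerSeries.X * (1 + PowerSeries.C (2 * r - 1) * PowerSeries.X +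
        PowerSeries.C (r * (r - 1)) * PowerSeries.X ^ 2)⁻¹) F = PowerSeries.X)
    (hG : G = (1 + PowerSeries.C (r * (1 - r)) * PowerSeries.X ^ 2) *
      (1 + PowerSeries.C (2 * r - 1) * PowerSeries.X +
        PowerSeries.C (r * (r - 1)) * PowerSeries.X ^ 2)⁻¹) :
    ∀ n : ℕ, PowerSeries.coeff n (psComp G F)⁻¹ =
      ∑ k ∈ Finset.range (n + 1),
        (-1 : ℝ) ^ (n - k) * ((n + k).choose (2 * k) : ℝ) * ((2 * k).choose k : ℝ) * r ^ k := by
  set ρ : ℝ⟦X⟧ := C r with hρ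
  set A : ℝ⟦X⟧ := 1 + C (2 * r - 1) * X + C (r * (r - 1)) * X ^ 2 with hAdef
  have hA0 : constantCoeff A = 1 := by
    rw [hAdef]; simp
  have hAW : A * A⁻¹ = 1 := PowerSeries.mul_inv_cancel _ (by rw [hA0]; norm_num)
  set W : ℝ⟦X⟧ := A⁻¹ with hWdef
  have hFW : F * psComp W F = X := by rw [← psComp_X_mul hF0 W]; exact hF
  set B : ℝ⟦X⟧ := 1 + C (2 * r - 1) * F + C (r * (r - 1)) * F ^ 2 with hBdef
  have hWB : psComp W F * B = 1 := by
    have h1 : psComp (A * W) F = 1 := by rw [hAW, psComp_one]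
    have h2 : A * W = W + C (2 * r - 1) * (X * W) + C (r * (r - 1)) * (X * (X * W)) := by
      rw [hAdef]; ring
    rw [h2, psComp_add, psComp_add, psComp_C_mul, psComp_C_mul, psComp_X_mul hF0,
      psComp_X_mul hF0, psComp_X_mul hF0] at h1
    rw [hBdef]
    linear_combination h1
  have hB0 : constantCoeff B = 1 := by rw [hBdef]; simp [hF0]
  have hW0 : constantCoeff (psComp W F) = 1 := by
    have h1 := congrArg (constantCoeff) hWB
    rw [map_mul, hB0, mul_one, map_one] at h1
    exact h1
  have hFXB : F = X * B := by
    calc F = F * (psComp W F * B) := by rw [hWB, mul_one]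
      _ = F * psComp W F * B := by ring
      _ = X * B := by rw [hFW]
  set M : ℝ⟦X⟧ := psComp G F with hMdef
  have hGM : M = psComp W F + C (r * (1 - r)) * (F * (F * psComp W F)) := by
    rw [hMdef, hG]
    have h2 : (1 + C (r * (1 - r)) * X ^ 2) * W
        = W + C (r * (1 - r)) * (X * (X * W)) := by ring
    rw [h2, psComp_add, psComp_C_mul, psComp_X_mul hF0, psComp_X_mul hF0]
  have hMF : M * F = X * (1 + C (r * (1 - r)) * F ^ 2) := by
    have h1 : M * F = (1 + C (r * (1 - r)) * F ^ 2) * (F * psComp W F) := by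
      rw [hGM]; ring
    rw [h1, hFW]; ring
  have hM0 : constantCoeff M = 1 := by
    rw [hGM]; simp [hW0, hF0]
  set H : ℝ⟦X⟧ := M⁻¹ with hHdef
  have hMH : M * H = 1 := PowerSeries.mul_inv_cancel _ (by rw [hM0]; norm_num)
  have hH0 : constantCoeff H = 1 := by
    rw [hHdef, PowerSeries.constantCoeff_inv, hM0]; norm_num
  have hHF : H * (X * (1 + C (r * (1 - r)) * F ^ 2)) = F := by
    calc H * (X * (1 + C (r * (1 - r)) * F ^ 2)) = H * (M * F) := by rw [hMF]
      _ = (M * H) * F := by ring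
      _ = F := by rw [hMH, one_mul]
  have ha : C (2 * r - 1) = 2 * ρ - 1 := by
    rw [hρ, map_sub, map_mul, map_one, map_ofNat]
  have hb : C (r * (r - 1)) = ρ * ρ - ρ := by
    rw [hρ, map_mul, map_sub, map_one, mul_sub, mul_one]
  have hcc : C (r * (1 - r)) = ρ - ρ * ρ := by
    rw [hρ, map_mul, map_sub, map_one, mul_sub, mul_one]
  have hd4 : C (4 * r - 2) = 4 * ρ - 2 := by
    rw [hρ, map_sub, map_mul, map_ofNat, map_ofNat]
  set D : ℝ⟦X⟧ := 1 - C (4 * r - 2) * X + X ^ 2 with hDdef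
  have key : F ^ 2 * D = X ^ 2 * (1 + C (r * (1 - r)) * F ^ 2) ^ 2 := by
    have hrel : F = X + (2 * ρ - 1) * (X * F) + (ρ * ρ - ρ) * (X * F ^ 2) := by
      calc F = X * B := hFXB
        _ = X + (2 * ρ - 1) * (X * F) + (ρ * ρ - ρ) * (X * F ^ 2) := by
            rw [hBdef, ha, hb]; ring
    rw [hDdef, hcc, hd4]
    linear_combination (X + F + (1 - 2 * ρ) * X * F + (ρ * ρ - ρ) * X * F ^ 2) * hrel
  have hF1 : coeff 1 F = 1 := by
    rw [hFXB, coeff_succ_X_mul 0 B, coeff_zero_eq_constantCoeff_apply, hB0]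
  have hFne : F ≠ 0 := by
    intro h; rw [h] at hF1; simp at hF1
  have hH2D : H ^ 2 * D = 1 := by
    have h1 : H ^ 2 * (X ^ 2 * (1 + C (r * (1 - r)) * F ^ 2) ^ 2) = F ^ 2 := by
      calc H ^ 2 * (X ^ 2 * (1 + C (r * (1 - r)) * F ^ 2) ^ 2)
          = (H * (X * (1 + C (r * (1 - r)) * F ^ 2))) ^ 2 := by ring
        _ = F ^ 2 := by rw [hHF]
    have h2 : F ^ 2 * (H ^ 2 * D) = F ^ 2 * 1 := by
      calc F ^ 2 * (H ^ 2 * D) = H ^ 2 * (F ^ 2 * D) := by ring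
        _ = H ^ 2 * (X ^ 2 * (1 + C (r * (1 - r)) * F ^ 2) ^ 2) := by rw [key]
        _ = F ^ 2 := h1
        _ = F ^ 2 * 1 := (mul_one _).symm
    exact mul_left_cancel₀ (pow_ne_zero 2 hFne) h2
  have hHne : H ≠ 0 := by
    intro h; rw [h] at hH0; simp at hH0
  have hdD : d⁄dX ℝ D = 2 * X - C (4 * r - 2) := by
    rw [hDdef]
    simp only [map_add, map_sub, Derivation.map_one_eq_zero, pow_two, Derivation.leibniz,
      smul_eq_mul, derivative_X, derivative_C]
    ring
  have hder : H * H * (d⁄dX ℝ D) + D * (H * (d⁄dX ℝ H) + H * (d⁄dX ℝ H)) = 0 := by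
    have h0 : d⁄dX ℝ (H * H * D) = 0 := by
      have : H * H * D = 1 := by rw [← hH2D]; ring
      rw [this, Derivation.map_one_eq_zero]
    rw [← h0]
    simp only [Derivation.leibniz, smul_eq_mul]
  have hODE : 2 * D * (d⁄dX ℝ H) = H * (C (4 * r - 2) - 2 * X) := by
    have h3 : H * (H * (2 * X - C (4 * r - 2)) + 2 * D * (d⁄dX ℝ H)) = 0 := by
      rw [hdD] at hder
      linear_combination hder
    have h4 : H * (2 * X - C (4 * r - 2)) + 2 * D * (d⁄dX ℝ H) = 0 := by
      rcases mul_eq_zero.mp h3 with h | h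
      · exact absurd h hHne
      · exact h
    linear_combination h4
  have hc2 : C (2:ℝ) = 2 := by rw [map_ofNat]
  have hcm2 : C (-2:ℝ) = -2 := by rw [map_neg, map_ofNat]
  have hc48 : C (4 - 8 * r) = -2 * C (4 * r - 2) := by
    rw [show (4 - 8 * r : ℝ) = -2 * (4 * r - 2) by ring, map_mul, map_neg, map_ofNat]
  have e1 : C (2:ℝ) * (d⁄dX ℝ H) + C (4 - 8 * r) * (X * (d⁄dX ℝ H))
        + C (2:ℝ) * (X * (X * (d⁄dX ℝ H)))
      = C (4 * r - 2) * H + C (-2:ℝ) * (X * H) := by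
    rw [hc2, hcm2, hc48, hDdef] at *
    linear_combination hODE
  have hrecH : ∀ n : ℕ, ((n : ℝ) + 1) * coeff (n+1) H + (n : ℝ) * coeff (n-1) H
      = (2 * (n : ℝ) + 1) * ((2 * r - 1) * coeff n H) := by
    intro n
    rcases n with _ | (_ | m)
    · have h0 := congrArg (coeff 0) e1
      simp only [map_add, coeff_C_mul, coeff_zero_X_mul, coeff_derivative] at h0
      norm_num at h0 ⊢
      linear_combination h0 / 2
    · have h0 := congrArg (coeff (0+1)) e1
      simp only [map_add, coeff_C_mul, coeff_succ_X_mul, coeff_zero_X_mul,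
        coeff_derivative] at h0
      norm_num at h0 ⊢
      linear_combination h0 / 2
    · have h0 := congrArg (coeff (m+1+1)) e1
      simp only [map_add, coeff_C_mul, coeff_succ_X_mul, coeff_zero_X_mul,
        coeff_derivative] at h0
      simp only [Nat.add_sub_cancel]
      push_cast at h0 ⊢
      linear_combination h0 / 2
  have base0 : coeff 0 H = pLeg r 0 := by
    rw [coeff_zero_eq_constantCoeff_apply, hH0]
    norm_num [pLeg]
  have base1 : coeff 1 H = pLeg r 1 := by
    have h0 := hrecH 0
    have hz : coeff 0 H = 1 := by rw [coeff_zero_eq_constantCoeff_apply, hH0]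
    have h1 : pLeg r 1 = 2 * r - 1 := by
      norm_num [pLeg, Finset.sum_range_succ]
      ring
    norm_num [hz] at h0
    rw [h1]
    linear_combination h0
  have main : ∀ n : ℕ, coeff n H = pLeg r n ∧ coeff (n+1) H = pLeg r (n+1) := by
    intro n
    induction n with
    | zero => exact ⟨base0, base1⟩
    | succ k ih =>
      refine ⟨ih.2, ?_⟩
      have h1 := hrecH (k+1)
      have h2 := pLeg_rec r (k+1)
      simp only [Nat.add_sub_cancel] at h1 h2
      rw [ih.1, ih.2] at h1
      have h3 : ((k : ℝ) + 2) * coeff (k+2) H = ((k : ℝ) + 2) * pLeg r (k+2) := by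
        push_cast at h1 h2 ⊢
        linear_combination h1 - h2
      exact mul_left_cancel₀ (by positivity) h3
  intro n
  exact ((main n).1).trans rfl
end
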